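/- arXiv:1209.1414 — 3 statements merged into one kernel-verified Lean document; each statement's English description precedes it below -/
import Mathlib

section
/- Let R be a discrete valuation ring with valuation v and a₂, a₄, a₆ ∈ R with v(a₂) = 1, v(a₄) ≥ (n+4)/2, v(a₆) ≥ n+3 for an integer n ≥ 1. Then v(Disc(x³ + a₂x² + a₄x + a₆) − a₂²(a₄² − 4a₂a₆)) ≥ n + 7. -/
/-- Let `R` be a DVR with uniformizer `π` and `a₂, a₄, a₆ ∈ R` with `v(a₂) = 1`,
`v(a₄) ≥ ⌈(n+4)/2⌉`, `v(a₆) ≥ n+3` for an integer `n ≥ 1`.  Then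
`v(Disc(x³ + a₂x² + a₄x + a₆) − a₂²(a₄² − 4a₂a₆)) ≥ n + 7`.
Valuation conditions are expressed via divisibility by powers of `π`. -/
theorem val_disc_sub_ge {R : Type*} [CommRing R] [IsDomain R] [IsDiscreteValuationRing R]
    (π : R) (hπ : Irreducible π) (n : ℕ) (hn : 1 ≤ n) (a₂ a₄ a₆ : R)
    (h2 : π ∣ a₂) (h2' : ¬ π ^ 2 ∣ a₂)
    (h4 : π ^ ((n + 5) / 2) ∣ a₄) (h6 : π ^ (n + 3) ∣ a₆) :
    π ^ (n + 7) ∣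
      (-4 * a₂ ^ 3 * a₆ + a₂ ^ 2 * a₄ ^ 2 - 4 * a₄ ^ 3 - 27 * a₆ ^ 2 + 18 * a₂ * a₄ * a₆)
        - a₂ ^ 2 * (a₄ ^ 2 - 4 * a₂ * a₆) := by
  have key : (-4 * a₂ ^ 3 * a₆ + a₂ ^ 2 * a₄ ^ 2 - 4 * a₄ ^ 3 - 27 * a₆ ^ 2 + 18 * a₂ * a₄ * a₆)
        - a₂ ^ 2 * (a₄ ^ 2 - 4 * a₂ * a₆)
      = (-4) * a₄ ^ 3 + (-27) * (a₆ * a₆) + 18 * (a₂ * a₄ * a₆) := by ring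
  rw [key]
  have hA : π ^ (n + 7) ∣ a₄ ^ 3 := by
    have h1 : (π ^ ((n + 5) / 2)) ^ 3 ∣ a₄ ^ 3 := pow_dvd_pow_of_dvd h4 3
    rw [← pow_mul] at h1
    exact dvd_trans (pow_dvd_pow π (by omega)) h1
  have hB : π ^ (n + 7) ∣ a₆ * a₆ := by
    have h1 : π ^ (n + 3) * π ^ (n + 3) ∣ a₆ * a₆ := mul_dvd_mul h6 h6
    rw [← pow_add] at h1
    exact dvd_trans (pow_dvd_pow π (by omega)) h1
  have hC : π ^ (n + 7) ∣ a₂ * a₄ * a₆ := by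
    have h4' : π ^ 3 ∣ a₄ := dvd_trans (pow_dvd_pow π (by omega)) h4
    have h1 : π ^ 1 * π ^ 3 * π ^ (n + 3) ∣ a₂ * a₄ * a₆ :=
      mul_dvd_mul (mul_dvd_mul (by simpa using h2) h4') h6
    rw [← pow_add, ← pow_add] at h1
    exact dvd_trans (pow_dvd_pow π (by omega)) h1
  exact dvd_add (dvd_add (hA.mul_left _) (hB.mul_left _)) (hC.mul_left _)
end

section
/- Let R ⊆ R' be an extension of discrete valuation rings with ramification index e (so v' restricted to R equals e·v). For a Weierstrass equation over Frac(R) with coefficients a₁,…,a₆ ∈ R, if min_i v(a_i)/i = m/12 for some m ∈ {0,2,3,4,6,8,9,10}, then min_i v'(a_i)/i = em/12, and after performing ⌊em/12⌋ rescalings x ↦ π'²x, y ↦ π'³y over R', the minimum of v'(A_i)/i over the new coefficients lies in {0, 1/6, 1/4, 1/3, 1/2, 2/3, 3/4, 5/6}. -/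
lemma tame_rescaling_min_aux (r : ℤ) (h0 : 0 ≤ r) (h12 : r < 12) (h23 : 2 ∣ r ∨ 3 ∣ r) :
    ((r : ℚ)) / 12 ∈ ({0, 1/6, 1/4, 1/3, 1/2, 2/3, 3/4, 5/6} : Set ℚ) := by
  simp only [Set.mem_insert_iff, Set.mem_singleton_iff]
  interval_cases r <;> first | omega | norm_num

/-- Arithmetic of valuations in a tame extension of ramification index `e` (so that the
valuation `v'` of the extension restricts to `e·v`).  If the valuations `nᵢ = v(aᵢ)`
(`i ∈ {1,2,3,4,6}`) of the Weierstrass coefficients satisfy `min_i nᵢ/i = m/12` with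
`m ∈ {0,2,3,4,6,8,9,10}`, then `min_i (e·nᵢ)/i = e·m/12`, and after `⌊em/12⌋` rescalings
(each rescaling subtracting `i` from the valuation of `aᵢ`) the minimum of the new
valuations divided by `i` lies in `{0, 1/6, 1/4, 1/3, 1/2, 2/3, 3/4, 5/6}`. -/
theorem tame_rescaling_min (e : ℤ) (he : 1 ≤ e) (m : ℤ)
    (hm : m ∈ ({0, 2, 3, 4, 6, 8, 9, 10} : Set ℤ))
    (n₁ n₂ n₃ n₄ n₆ : ℤ)
    (hmin : min (min (min (min ((n₁ : ℚ) / 1) ((n₂ : ℚ) / 2)) ((n₃ : ℚ) / 3))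
      ((n₄ : ℚ) / 4)) ((n₆ : ℚ) / 6) = (m : ℚ) / 12) :
    min (min (min (min ((e * n₁ : ℚ) / 1) ((e * n₂ : ℚ) / 2)) ((e * n₃ : ℚ) / 3))
        ((e * n₄ : ℚ) / 4)) ((e * n₆ : ℚ) / 6) = (e * m : ℚ) / 12 ∧
      min (min (min (min (((e * n₁ - 1 * (e * m / 12) : ℤ) : ℚ) / 1)
              (((e * n₂ - 2 * (e * m / 12) : ℤ) : ℚ) / 2))
            (((e * n₃ - 3 * (e * m / 12) : ℤ) : ℚ) / 3))
          (((e * n₄ - 4 * (e * m / 12) : ℤ) : ℚ) / 4))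
        (((e * n₆ - 6 * (e * m / 12) : ℤ) : ℚ) / 6)
        ∈ ({0, 1/6, 1/4, 1/3, 1/2, 2/3, 3/4, 5/6} : Set ℚ) := by
  have he0 : (0 : ℚ) ≤ (e : ℚ) := by exact_mod_cast (zero_le_one.trans he)
  have hfirst : min (min (min (min ((e * n₁ : ℚ) / 1) ((e * n₂ : ℚ) / 2)) ((e * n₃ : ℚ) / 3))
        ((e * n₄ : ℚ) / 4)) ((e * n₆ : ℚ) / 6) = (e * m : ℚ) / 12 := by
    have h1 : ((e : ℚ) * (n₁ : ℚ)) / 1 = (e : ℚ) * ((n₁ : ℚ) / 1) := by push_cast; ring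
    have h2 : ((e : ℚ) * (n₂ : ℚ)) / 2 = (e : ℚ) * ((n₂ : ℚ) / 2) := by push_cast; ring
    have h3 : ((e : ℚ) * (n₃ : ℚ)) / 3 = (e : ℚ) * ((n₃ : ℚ) / 3) := by push_cast; ring
    have h4 : ((e : ℚ) * (n₄ : ℚ)) / 4 = (e : ℚ) * ((n₄ : ℚ) / 4) := by push_cast; ring
    have h6 : ((e : ℚ) * (n₆ : ℚ)) / 6 = (e : ℚ) * ((n₆ : ℚ) / 6) := by push_cast; ring
    rw [h1, h2, h3, h4, h6, ← mul_min_of_nonneg _ _ he0, ← mul_min_of_nonneg _ _ he0,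
      ← mul_min_of_nonneg _ _ he0, ← mul_min_of_nonneg _ _ he0, hmin]
    push_cast; ring
  refine ⟨hfirst, ?_⟩
  set k : ℤ := e * m / 12 with hk
  have g1 : ((e * n₁ - 1 * k : ℤ) : ℚ) / 1 = ((e * n₁ : ℤ) : ℚ) / 1 - (k : ℚ) := by
    push_cast; ring
  have g2 : ((e * n₂ - 2 * k : ℤ) : ℚ) / 2 = ((e * n₂ : ℤ) : ℚ) / 2 - (k : ℚ) := by
    push_cast; ring
  have g3 : ((e * n₃ - 3 * k : ℤ) : ℚ) / 3 = ((e * n₃ : ℤ) : ℚ) / 3 - (k : ℚ) := by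
    push_cast; ring
  have g4 : ((e * n₄ - 4 * k : ℤ) : ℚ) / 4 = ((e * n₄ : ℤ) : ℚ) / 4 - (k : ℚ) := by
    push_cast; ring
  have g6 : ((e * n₆ - 6 * k : ℤ) : ℚ) / 6 = ((e * n₆ : ℤ) : ℚ) / 6 - (k : ℚ) := by
    push_cast; ring
  rw [g1, g2, g3, g4, g6, min_sub_sub_right, min_sub_sub_right, min_sub_sub_right,
    min_sub_sub_right]
  push_cast
  rw [hfirst]
  -- Now the goal is (e*m : ℚ)/12 - (e*m/12 : ℤ) ∈ set
  have h23 : 2 ∣ m ∨ 3 ∣ m := by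
    simp only [Set.mem_insert_iff, Set.mem_singleton_iff] at hm
    rcases hm with h | h | h | h | h | h | h | h <;> subst h <;> omega
  have h23' : 2 ∣ e * m ∨ 3 ∣ e * m := by
    rcases h23 with h | h
    · exact Or.inl (h.mul_left e)
    · exact Or.inr (h.mul_left e)
  set N : ℤ := e * m with hN
  set r : ℤ := N % 12 with hr
  have hsplit : N = 12 * k + r := by
    rw [hk, hr, hN]; omega
  have hr23 : 2 ∣ r ∨ 3 ∣ r := by
    rcases h23' with h | h
    · left; omega
    · right; omega
  have hrb : 0 ≤ r ∧ r < 12 := by constructor <;> [exact Int.emod_nonneg N (by norm_num); exact Int.emod_lt_of_pos N (by norm_num)]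
  have hval : (e : ℚ) * (m : ℚ) / 12 - (k : ℚ) = (r : ℚ) / 12 := by
    have h : (e : ℚ) * (m : ℚ) = 12 * (k : ℚ) + (r : ℚ) := by
      exact_mod_cast congrArg (fun z : ℤ => (z : ℚ)) hsplit
    rw [h]; ring
  rw [hval]
  obtain ⟨hr0, hr12⟩ := hrb
  exact tame_rescaling_min_aux r hr0 hr12 hr23
end

section
/- Let e be odd and n ≥ 1. If the integers (v(a_i)) satisfy v(a₂) = 1 and v(a_i) ≥ i/2 + ⌊(i−1)/2⌋·n/2 for i ∈ {1,3,4,6}, then after multiplying all valuations by e and subtracting i·(e−1)/2 (one rescaling step repeated (e−1)/2 times), the new valuations V(a_i) = e·v(a_i) − i(e−1)/2 satisfy V(a₂) = 1 and V(a_i) ≥ i/2 + ⌊(i−1)/2⌋·(en)/2. -/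
/-- The arithmetic core of the proof that type `I*_n` becomes `I*_{en}` under a tame
extension of odd degree `e`: if the valuations `v(aᵢ)` satisfy `v(a₂) = 1` and
`v(aᵢ) ≥ i/2 + ⌊(i−1)/2⌋·n/2` for `i ∈ {1,3,4,6}`, then the rescaled valuations
`V(aᵢ) = e·v(aᵢ) − i·(e−1)/2` satisfy `V(a₂) = 1` and
`V(aᵢ) ≥ i/2 + ⌊(i−1)/2⌋·(en)/2`. -/
theorem Instar_tame_odd (e n : ℤ) (he : Odd e) (he1 : 1 ≤ e) (hn : 1 ≤ n)
    (v₁ v₂ v₃ v₄ v₆ : ℚ)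
    (h2 : v₂ = 1)
    (h1 : v₁ ≥ 1 / 2 + 0 * (n : ℚ) / 2)
    (h3 : v₃ ≥ 3 / 2 + 1 * (n : ℚ) / 2)
    (h4 : v₄ ≥ 4 / 2 + 1 * (n : ℚ) / 2)
    (h6 : v₆ ≥ 6 / 2 + 2 * (n : ℚ) / 2) :
    (e : ℚ) * v₂ - 2 * ((e : ℚ) - 1) / 2 = 1 ∧
    (e : ℚ) * v₁ - 1 * ((e : ℚ) - 1) / 2 ≥ 1 / 2 + 0 * ((e * n : ℤ) : ℚ) / 2 ∧
    (e : ℚ) * v₃ - 3 * ((e : ℚ) - 1) / 2 ≥ 3 / 2 + 1 * ((e * n : ℤ) : ℚ) / 2 ∧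
    (e : ℚ) * v₄ - 4 * ((e : ℚ) - 1) / 2 ≥ 4 / 2 + 1 * ((e * n : ℤ) : ℚ) / 2 ∧
    (e : ℚ) * v₆ - 6 * ((e : ℚ) - 1) / 2 ≥ 6 / 2 + 2 * ((e * n : ℤ) : ℚ) / 2 := by
  have he' : (1 : ℚ) ≤ (e : ℚ) := by exact_mod_cast he1
  push_cast
  refine ⟨by rw [h2]; ring, ?_, ?_, ?_, ?_⟩ <;> nlinarith [mul_le_mul_of_nonneg_left h1 (by linarith : (0:ℚ) ≤ e), mul_le_mul_of_nonneg_left h3 (by linarith : (0:ℚ) ≤ e), mul_le_mul_of_nonneg_left h4 (by linarith : (0:ℚ) ≤ e), mul_le_mul_of_nonneg_left h6 (by linarith : (0:ℚ) ≤ e)]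
end
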